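/- Let K be a field of characteristic p > 0 containing a primitive mn-th root of unity ζ_{mn} with m, n ≥ 2 and mn prime to p; set ζ = (ζ_{mn})^m. Let a ∈ K* have class of order n in K*/(K*)^n, let L = K[X]/(X^n − a), θ the class of X, and θ_k = 1/(ζ^{−k}θ − 1) for 0 ≤ k ≤ n − 1. Then for every i with 1 ≤ i ≤ n − 1 one has θ_0 · θ_i = (ζ^{−i} − 1)^{−1}(θ_0 − ζ^{−i} θ_i), and consequently the total number of nonzero coefficients appearing when each product θ_0 · θ_i (for 0 ≤ i ≤ n − 1) is expanded in the basis (θ_0, …, θ_{n−1}) is at most 3n − 2. -/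

import Mathlib

open Polynomial

/-- Irreducibility of `X^n - a` when the class of `a` has order `n` in `K*/(K*)^n`. -/
theorem my_irred_aux {K : Type*} [Field K] {n : ℕ} (hn : 2 ≤ n) {a : K}
    (ha : ∀ r : ℕ, 0 < r → r < n → ¬ ∃ x : K, x ^ n = a ^ r) :
    Irreducible (X ^ n - C a : K[X]) := by
  have hn0 : n ≠ 0 := by omega
  have hmo : (X ^ n - C a : K[X]).Monic := monic_X_pow_sub_C a hn0
  have hdeg : (X ^ n - C a : K[X]).natDegree = n := by
    simpa using natDegree_X_pow_sub_C (n := n) (a := a)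
  by_contra hred
  obtain ⟨g, hgm, hgi, hgd⟩ := (X ^ n - C a : K[X]).exists_monic_irreducible_factor
    (not_isUnit_of_natDegree_pos _ (by omega))
  set d := g.natDegree with hd
  have hgne : g ≠ 0 := hgm.ne_zero
  have hd0 : 0 < d := by
    rcases Nat.eq_zero_or_pos d with h | h
    swap
    · exact h
    · exact absurd (hgm.natDegree_eq_zero.mp h) (by
        intro h1; exact hgi.not_isUnit (h1 ▸ isUnit_one))
  have hdle : d ≤ n := hdeg ▸ natDegree_le_of_dvd hgd hmo.ne_zero
  have hdn : d < n := by
    rcases lt_or_eq_of_le hdle with h | h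
    · exact h
    · -- then g = X^n - C a, so it would be irreducible
      exfalso
      obtain ⟨q, hq⟩ := hgd
      have hq0 : q ≠ 0 := by
        rintro rfl; rw [mul_zero] at hq; exact hmo.ne_zero hq
      have hqd : q.natDegree = 0 := by
        have := natDegree_mul hgne hq0
        rw [← hq, hdeg, ← hd, h] at this
        omega
      have hql : q.leadingCoeff = 1 := by
        have := hmo
        rw [Monic, hq, leadingCoeff_mul, hgm.leadingCoeff, one_mul] at this
        exact this
      have hq1 : q = 1 := by
        rw [eq_C_of_natDegree_eq_zero hqd]
        rw [leadingCoeff, hqd] at hql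
        rw [hql, map_one]
      rw [hq1, mul_one] at hq
      exact hred (hq ▸ hgi)
  -- pass to the algebraic closure
  set E := AlgebraicClosure K
  set φ := algebraMap K E
  set gE := g.map φ with hgE
  have hgEm : gE.Monic := hgm.map φ
  have hgEd : gE.natDegree = d := natDegree_map_eq_of_injective φ.injective g
  have hsp : gE.Splits := IsAlgClosed.splits gE
  have hcard : gE.roots.card = d := by
    rw [splits_iff_card_roots.mp hsp, hgEd]
  have hcoeff : gE.coeff 0 = (-1) ^ d * gE.roots.prod := by
    rw [hsp.coeff_zero_eq_prod_roots_of_monic hgEm, hgEd]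
  have hroots : ∀ r ∈ gE.roots, r ^ n = φ a := by
    intro r hr
    have hr' : gE.IsRoot r := isRoot_of_mem_roots hr
    have hdvd : gE ∣ (X ^ n - C a : K[X]).map φ := Polynomial.map_dvd φ hgd
    have : ((X ^ n - C a : K[X]).map φ).IsRoot r := hr'.dvd hdvd
    rw [Polynomial.map_sub, Polynomial.map_pow, map_X, map_C] at this
    have := this
    rw [IsRoot, eval_sub, eval_pow, eval_X, eval_C, sub_eq_zero] at this
    exact this
  have hprod : gE.roots.prod ^ n = φ (a ^ d) := by
    have h1 : (gE.roots.map (fun r => r ^ n)).prod = gE.roots.prod ^ n := by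
      simpa using Multiset.prod_map_pow (m := gE.roots) (f := id) (n := n)
    have h2 : gE.roots.map (fun r => r ^ n) = Multiset.replicate d (φ a) := by
      rw [Multiset.eq_replicate]
      constructor
      · rw [Multiset.card_map, hcard]
      · intro b hb
        obtain ⟨r, hr, rfl⟩ := Multiset.mem_map.mp hb
        exact hroots r hr
    rw [← h1, h2, Multiset.prod_replicate, map_pow]
  -- conclude
  refine ha d hd0 hdn ⟨(-1) ^ d * g.coeff 0, ?_⟩
  apply φ.injective
  have hpr : gE.roots.prod = (-1) ^ d * gE.coeff 0 := by
    rw [hcoeff, ← mul_assoc, ← pow_add]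
    have : (-1 : E) ^ (d + d) = 1 := by
      rw [← two_mul, pow_mul, neg_one_sq, one_pow]
    rw [this, one_mul]
  have : φ ((-1) ^ d * g.coeff 0) = gE.roots.prod := by
    rw [map_mul, map_pow, map_neg, map_one, hpr, hgE, coeff_map]
  rw [map_pow, this, hprod]

/-- In the Kummer normal basis `θ_k = 1/(ζ^{-k} θ - 1)`, one has
`θ_0 · θ_i = (ζ^{-i} - 1)⁻¹ (θ_0 - ζ^{-i} θ_i)` for `i ≠ 0`, and the total number of
nonzero coefficients of the products `θ_0 · θ_i` in the basis `(θ_0, …, θ_{n-1})` is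
at most `3n - 2`. -/
theorem stmt_7 (K : Type*) [Field K] (p : ℕ) (hp : 0 < p) [CharP K p]
    (m n : ℕ) [NeZero n] (hm : 2 ≤ m) (hn : 2 ≤ n) (hcop : Nat.Coprime (m * n) p)
    (ζ : K) (hζ : IsPrimitiveRoot ζ (m * n))
    (a : K) (ha0 : a ≠ 0)
    (ha : ∀ r : ℕ, 0 < r → r < n → ¬ ∃ x : K, x ^ n = a ^ r) :
    ∃ hirr : Irreducible (X ^ n - C a : K[X]),
      letI : Fact (Irreducible (X ^ n - C a : K[X])) := ⟨hirr⟩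
      ∀ Θ : ZMod n → AdjoinRoot (X ^ n - C a : K[X]),
        (∀ k : ZMod n, Θ k =
          (algebraMap K (AdjoinRoot (X ^ n - C a : K[X])) (((ζ ^ m)⁻¹) ^ k.val) *
              AdjoinRoot.root (X ^ n - C a : K[X]) - 1)⁻¹) →
        (∀ i : ZMod n, i ≠ 0 →
          Θ 0 * Θ i =
            algebraMap K (AdjoinRoot (X ^ n - C a : K[X]))
                ((((ζ ^ m)⁻¹) ^ i.val - 1)⁻¹) *
              (Θ 0 - algebraMap K (AdjoinRoot (X ^ n - C a : K[X]))
                  (((ζ ^ m)⁻¹) ^ i.val) * Θ i)) ∧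
        ∀ B : Module.Basis (ZMod n) K (AdjoinRoot (X ^ n - C a : K[X])),
          (∀ k : ZMod n, B k = Θ k) →
          ∑ i : ZMod n, (B.repr (Θ 0 * Θ i)).support.card ≤ 3 * n - 2 := by
  have hirr : Irreducible (X ^ n - C a : K[X]) := my_irred_aux hn ha
  refine ⟨hirr, ?_⟩
  letI : Fact (Irreducible (X ^ n - C a : K[X])) := ⟨hirr⟩
  intro Θ hΘ
  set A := algebraMap K (AdjoinRoot (X ^ n - C a : K[X])) with hA
  set θ := AdjoinRoot.root (X ^ n - C a : K[X]) with hθ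
  have hζn : IsPrimitiveRoot ((ζ ^ m)⁻¹ : K) n :=
    (hζ.pow (by positivity) rfl).inv
  have hζ0 : ((ζ ^ m)⁻¹ : K) ≠ 0 := inv_ne_zero (pow_ne_zero _ (hζ.ne_zero (by positivity)))
  have hθn : θ ^ n = A a := by
    rw [hθ, root_X_pow_sub_C_pow n a, hA, AdjoinRoot.algebraMap_eq]
  have hK : ∀ c : K, A c * θ - 1 ≠ 0 := by
    intro c h
    rw [sub_eq_zero] at h
    have hc0 : c ≠ 0 := by
      rintro rfl
      rw [map_zero, zero_mul] at h
      exact zero_ne_one h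
    have hθeq : θ = A c⁻¹ := by
      rw [map_inv₀]
      exact eq_inv_of_mul_eq_one_right h
    refine ha 1 one_pos (by omega) ⟨c⁻¹, ?_⟩
    apply A.injective
    rw [map_pow, ← hθeq, hθn, pow_one]
  have hval0 : ((0 : ZMod n).val) = 0 := ZMod.val_zero
  have hΘ0 : Θ 0 = (θ - 1)⁻¹ := by
    rw [hΘ 0, hval0, pow_zero, map_one, one_mul]
  have hident : ∀ i : ZMod n, i ≠ 0 →
      Θ 0 * Θ i = A ((((ζ ^ m)⁻¹) ^ i.val - 1)⁻¹) *
        (Θ 0 - A (((ζ ^ m)⁻¹) ^ i.val) * Θ i) := by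
    intro i hi
    set w : K := ((ζ ^ m)⁻¹) ^ i.val with hw
    have hival : 0 < i.val := by
      rcases Nat.eq_zero_or_pos i.val with h | h
      · exact absurd ((ZMod.val_eq_zero i).mp h) hi
      · exact h
    have hw1 : w ≠ 1 := hζn.pow_ne_one_of_pos_of_lt hival.ne' (ZMod.val_lt i)
    have hwsub : w - 1 ≠ 0 := sub_ne_zero.mpr hw1
    have h1 : θ - 1 ≠ 0 := by
      have := hK 1; rwa [map_one, one_mul] at this
    have h2 : A w * θ - 1 ≠ 0 := hK w
    have h3 : A w - 1 ≠ 0 := by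
      intro h
      apply hwsub
      apply A.injective
      rw [map_sub, map_one, h, map_zero]
    rw [hΘ0, hΘ i, ← hw, map_inv₀, map_sub, map_one]
    have h2' : -1 + A w * θ ≠ 0 := by rw [neg_add_eq_sub]; exact h2
    field_simp
    linear_combination inv_mul_cancel₀ h2'
  constructor
  · exact hident
  · intro B hB
    have key : ∀ i : ZMod n, i ≠ 0 → (B.repr (Θ 0 * Θ i)).support.card ≤ 2 := by
      intro i hi
      set w : K := ((ζ ^ m)⁻¹) ^ i.val with hw
      set c : K := (w - 1)⁻¹ with hc
      have hsum : Θ 0 * Θ i = c • B 0 + (-(c * w)) • B i := by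
        rw [hident i hi, hB 0, hB i, Algebra.smul_def, Algebra.smul_def, map_neg, map_mul]
        ring
      rw [hsum, map_add, map_smul, map_smul, B.repr_self, B.repr_self]
      calc (c • Finsupp.single (0 : ZMod n) (1 : K)
              + (-(c * w)) • Finsupp.single i (1 : K)).support.card
          ≤ ((c • Finsupp.single (0 : ZMod n) (1 : K)).support
              ∪ ((-(c * w)) • Finsupp.single i (1 : K)).support).card :=
            Finset.card_le_card Finsupp.support_add
        _ ≤ (c • Finsupp.single (0 : ZMod n) (1 : K)).support.card
              + ((-(c * w)) • Finsupp.single i (1 : K)).support.card :=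
            Finset.card_union_le _ _
        _ ≤ 1 + 1 := by
            gcongr
            · calc _ ≤ ({0} : Finset (ZMod n)).card := by
                    apply Finset.card_le_card
                    rw [Finsupp.smul_single]
                    exact Finsupp.support_single_subset
                _ = 1 := Finset.card_singleton _
            · calc _ ≤ ({i} : Finset (ZMod n)).card := by
                    apply Finset.card_le_card
                    rw [Finsupp.smul_single]
                    exact Finsupp.support_single_subset
                _ = 1 := Finset.card_singleton _
        _ = 2 := rfl
    have key0 : (B.repr (Θ 0 * Θ 0)).support.card ≤ n := by
      calc (B.repr (Θ 0 * Θ 0)).support.card ≤ Fintype.card (ZMod n) :=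
            Finset.card_le_univ _
        _ = n := ZMod.card n
    calc ∑ i : ZMod n, (B.repr (Θ 0 * Θ i)).support.card
        ≤ ∑ i : ZMod n, (2 + if i = 0 then n - 2 else 0) := by
          apply Finset.sum_le_sum
          intro i _
          by_cases hi : i = 0
          · subst hi; rw [if_pos (rfl : (0 : ZMod n) = 0)]; omega
          · simp only [if_neg hi, add_zero]; exact key i hi
      _ = 2 * n + (n - 2) := by
          rw [Finset.sum_add_distrib, Finset.sum_const, Finset.card_univ, ZMod.card,
            Finset.sum_ite_eq' Finset.univ (0 : ZMod n) (fun _ => n - 2),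
            if_pos (Finset.mem_univ _), smul_eq_mul, mul_comm]
      _ = 3 * n - 2 := by omega
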